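/- Let R be a noetherian local ring with maximal ideal m, M an R-module of finite length, and φ : M → M an additive map satisfying φ(r·x) = r^p · φ(x) for a fixed ring endomorphism r ↦ r^p of R (Frobenius semilinearity, char R = p). Then for every x ∈ M there exist n ≥ 1 and elements c_0, …, c_{n−1} ∈ R such that φ^n(x) + c_{n−1} φ^{n−1}(x) + ⋯ + c_1 φ(x) + c_0 x = 0. -/

import Mathlib

/-- Let `R` be a noetherian local `𝔽_p`-algebra and `M` a finite length `R`-module with
a Frobenius-semilinear additive endomorphism `φ` (`φ(r • x) = r^p • φ(x)`). Then every
`x ∈ M` is annihilated by a monic additive polynomial in `φ`: there are `n ≥ 1` and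
`c_0, …, c_{n-1} ∈ R` with `φ^n(x) + ∑ c_i φ^i(x) = 0`. -/
theorem stmt_15 (p : ℕ) [Fact p.Prime] (R : Type*) [CommRing R] [IsNoetherianRing R]
    [IsLocalRing R] [CharP R p]
    (M : Type*) [AddCommGroup M] [Module R M] (hM : IsFiniteLength R M)
    (φ : M →+ M) (hφ : ∀ (r : R) (x : M), φ (r • x) = r ^ p • φ x) (x : M) :
    ∃ n : ℕ, 0 < n ∧ ∃ c : Fin n → R,
      φ^[n] x + ∑ i : Fin n, c i • φ^[(i : ℕ)] x = 0 := by
  have hNoeth : IsNoetherian R M := (isFiniteLength_iff_isNoetherian_isArtinian.mp hM).1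
  -- the ascending chain of spans of {x, φx, ..., φ^k x}
  set N : ℕ →o Submodule R M :=
    ⟨fun k => Submodule.span R (Set.range fun i : Fin (k + 1) => φ^[(i : ℕ)] x),
     by
      intro a b hab
      apply Submodule.span_mono
      rintro _ ⟨i, rfl⟩
      exact ⟨⟨i, by omega⟩, rfl⟩⟩ with hN
  obtain ⟨k, hk⟩ := monotone_stabilizes_iff_noetherian.mpr hNoeth N
  have hmem : φ^[k + 1] x ∈ N k := by
    rw [hk (k + 1) (Nat.le_succ k)]
    exact Submodule.subset_span ⟨⟨k + 1, by omega⟩, rfl⟩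
  rw [hN] at hmem
  obtain ⟨c, hc⟩ := (Submodule.mem_span_range_iff_exists_fun R).mp hmem
  refine ⟨k + 1, Nat.succ_pos k, fun i => -c i, ?_⟩
  have : ∑ i : Fin (k + 1), (-c i) • φ^[(i : ℕ)] x
      = -∑ i : Fin (k + 1), c i • φ^[(i : ℕ)] x := by
    simp [neg_smul, Finset.sum_neg_distrib]
  rw [this, hc, add_neg_cancel]
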